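/- On ℙ³ with homogeneous coordinates x,y,z,w, let I = (xz, xw, yz, yw) be the ideal sheaf of the disjoint union of the two lines {x=y=0} and {z=w=0}. Then there exists a surjection of sheaves Ω¹_{ℙ³} → I (after suitable twist: Hom(Ω¹_{ℙ³}, I) is 1-dimensional and any nonzero homomorphism is surjective). -/
import Mathlib

open MvPolynomial

/-- Substitution killing `x₀, x₁`. -/
noncomputable def σ4 : Fin 4 → MvPolynomial (Fin 4) ℂ := ![0, 0, X 2, X 3]

lemma sub_aeval_mem (f : MvPolynomial (Fin 4) ℂ) :
    f - aeval σ4 f ∈ Ideal.span {X 0, X 1} := by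
  induction f using MvPolynomial.induction_on with
  | C a => simp
  | add p q hp hq =>
      rw [map_add]
      have := Ideal.add_mem _ hp hq
      convert this using 1; ring
  | mul_X p i hp =>
      rw [map_mul, aeval_X]
      fin_cases i
      · show p * X 0 - aeval σ4 p * σ4 0 ∈ _
        rw [show σ4 0 = 0 from rfl, mul_zero, sub_zero]
        exact Ideal.mul_mem_left _ p (Ideal.subset_span (by simp))
      · show p * X 1 - aeval σ4 p * σ4 1 ∈ _
        rw [show σ4 1 = 0 from rfl, mul_zero, sub_zero]
        exact Ideal.mul_mem_left _ p (Ideal.subset_span (by simp))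
      · show p * X 2 - aeval σ4 p * σ4 2 ∈ _
        rw [show σ4 2 = X 2 from rfl,
          show p * X 2 - aeval σ4 p * X 2 = (p - aeval σ4 p) * X 2 by ring]
        exact Ideal.mul_mem_right _ _ hp
      · show p * X 3 - aeval σ4 p * σ4 3 ∈ _
        rw [show σ4 3 = X 3 from rfl,
          show p * X 3 - aeval σ4 p * X 3 = (p - aeval σ4 p) * X 3 by ring]
        exact Ideal.mul_mem_right _ _ hp

/-- The target ideal. -/
noncomputable def I4 : Ideal (MvPolynomial (Fin 4) ℂ) :=
  Ideal.span {X 0 * X 2, X 0 * X 3, X 1 * X 2, X 1 * X 3}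

lemma gen_mem₁ : (X 0 * X 2 : MvPolynomial (Fin 4) ℂ) ∈ I4 :=
  Ideal.subset_span (by simp)
lemma gen_mem₂ : (X 0 * X 3 : MvPolynomial (Fin 4) ℂ) ∈ I4 :=
  Ideal.subset_span (by simp)
lemma gen_mem₃ : (X 1 * X 2 : MvPolynomial (Fin 4) ℂ) ∈ I4 :=
  Ideal.subset_span (by simp)
lemma gen_mem₄ : (X 1 * X 3 : MvPolynomial (Fin 4) ℂ) ∈ I4 :=
  Ideal.subset_span (by simp)

lemma X2_mul_mem {p : MvPolynomial (Fin 4) ℂ} (hp : p ∈ Ideal.span {X 0, X 1}) :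
    X 2 * p ∈ I4 := by
  obtain ⟨a, b, hab⟩ := Ideal.mem_span_pair.mp hp
  rw [show X 2 * p = a * (X 0 * X 2) + b * (X 1 * X 2) by rw [← hab]; ring]
  exact Ideal.add_mem _ (Ideal.mul_mem_left _ _ gen_mem₁) (Ideal.mul_mem_left _ _ gen_mem₃)

lemma X3_mul_mem {p : MvPolynomial (Fin 4) ℂ} (hp : p ∈ Ideal.span {X 0, X 1}) :
    X 3 * p ∈ I4 := by
  obtain ⟨a, b, hab⟩ := Ideal.mem_span_pair.mp hp
  rw [show X 3 * p = a * (X 0 * X 3) + b * (X 1 * X 3) by rw [← hab]; ring]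
  exact Ideal.add_mem _ (Ideal.mul_mem_left _ _ gen_mem₂) (Ideal.mul_mem_left _ _ gen_mem₄)

lemma key_mem (f : Fin 4 → MvPolynomial (Fin 4) ℂ)
    (hf : X 0 * f 0 + X 1 * f 1 + X 2 * f 2 + X 3 * f 3 = 0) :
    X 2 * f 2 + X 3 * f 3 ∈ I4 := by
  have hS : X 2 * aeval σ4 (f 2) + X 3 * aeval σ4 (f 3) = 0 := by
    have h := congrArg (aeval σ4) hf
    simp only [map_add, map_mul, aeval_X, map_zero] at h
    rw [show σ4 0 = 0 from rfl, show σ4 1 = 0 from rfl,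
      show σ4 2 = X 2 from rfl, show σ4 3 = X 3 from rfl] at h
    linear_combination h
  have heq : X 2 * f 2 + X 3 * f 3
      = X 2 * (f 2 - aeval σ4 (f 2)) + X 3 * (f 3 - aeval σ4 (f 3)) := by
    linear_combination hS
  rw [heq]
  exact Ideal.add_mem _ (X2_mul_mem (sub_aeval_mem _)) (X3_mul_mem (sub_aeval_mem _))

open MvPolynomial in
/-- On `ℙ³` with coordinates `x,y,z,w`, let
`I = (xz, xw, yz, yw)` be the ideal of the disjoint union of the lines
`{x=y=0}` and `{z=w=0}`.  There is a surjection `Ω¹_{ℙ³} → I` (after a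
suitable twist).  At the level of graded modules over
`R = ℂ[x,y,z,w]`, the module of `Ω¹_{ℙ³}` is the kernel `Ω` of the Euler map
`R⁴ → R`, `(f₀,f₁,f₂,f₃) ↦ Σ xᵢfᵢ`, and the claim is that there exists a
surjective `R`-module homomorphism `Ω → I`. -/
theorem stmt_16 :
    let R := MvPolynomial (Fin 4) ℂ
    let ε : (Fin 4 → R) →ₗ[R] R := ∑ i : Fin 4, (MvPolynomial.X i : R) • (LinearMap.proj i : (Fin 4 → R) →ₗ[R] R)
    let Ω := LinearMap.ker ε
    let I : Ideal R := Ideal.span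
      {MvPolynomial.X 0 * MvPolynomial.X 2, MvPolynomial.X 0 * MvPolynomial.X 3,
       MvPolynomial.X 1 * MvPolynomial.X 2, MvPolynomial.X 1 * MvPolynomial.X 3}
    ∃ φ : Ω →ₗ[R] I, Function.Surjective φ := by
  intro R ε Ω I
  have hI : I = I4 := rfl
  have hε : ∀ f : Fin 4 → R, ε f = X 0 * f 0 + X 1 * f 1 + X 2 * f 2 + X 3 * f 3 := by
    intro f
    simp only [ε, LinearMap.sum_apply, LinearMap.add_apply, LinearMap.smul_apply,
      LinearMap.proj_apply, smul_eq_mul, Fin.sum_univ_four]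
  -- the linear functional  f ↦ x₂ f₂ + x₃ f₃  on Ω
  set ψ : Ω →ₗ[R] R :=
    ((X 2 : R) • (LinearMap.proj 2 : (Fin 4 → R) →ₗ[R] R)
      + (X 3 : R) • (LinearMap.proj 3 : (Fin 4 → R) →ₗ[R] R)).comp Ω.subtype with hψ
  have hψval : ∀ f : Ω, ψ f = X 2 * f.1 2 + X 3 * f.1 3 := by
    intro f
    simp only [hψ, LinearMap.comp_apply, Submodule.subtype_apply, LinearMap.add_apply,
      LinearMap.smul_apply, LinearMap.proj_apply, smul_eq_mul]
  have hmem : ∀ f : Ω, ψ f ∈ I := by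
    intro f
    rw [hψval, hI]
    refine key_mem f.1 ?_
    have h := f.2
    rw [LinearMap.mem_ker, hε] at h
    exact h
  refine ⟨LinearMap.codRestrict I ψ hmem, ?_⟩
  -- surjectivity: all four generators are in the range of ψ
  have hrange : I ≤ LinearMap.range ψ := by
    rw [hI]
    refine Ideal.span_le.mpr ?_
    intro g hg
    simp only [Set.mem_insert_iff, Set.mem_singleton_iff] at hg
    rcases hg with h | h | h | h
    · refine ⟨⟨![-X 2, 0, X 0, 0], ?_⟩, ?_⟩
      · rw [LinearMap.mem_ker, hε]; show X 0 * (-X 2) + X 1 * 0 + X 2 * X 0 + X 3 * 0 = 0; ring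
      · rw [hψval, h]; show X 2 * X 0 + X 3 * 0 = X 0 * X 2; ring
    · refine ⟨⟨![-X 3, 0, 0, X 0], ?_⟩, ?_⟩
      · rw [LinearMap.mem_ker, hε]; show X 0 * (-X 3) + X 1 * 0 + X 2 * 0 + X 3 * X 0 = 0; ring
      · rw [hψval, h]; show X 2 * 0 + X 3 * X 0 = X 0 * X 3; ring
    · refine ⟨⟨![0, -X 2, X 1, 0], ?_⟩, ?_⟩
      · rw [LinearMap.mem_ker, hε]; show X 0 * 0 + X 1 * (-X 2) + X 2 * X 1 + X 3 * 0 = 0; ring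
      · rw [hψval, h]; show X 2 * X 1 + X 3 * 0 = X 1 * X 2; ring
    · refine ⟨⟨![0, -X 3, 0, X 1], ?_⟩, ?_⟩
      · rw [LinearMap.mem_ker, hε]; show X 0 * 0 + X 1 * (-X 3) + X 2 * 0 + X 3 * X 1 = 0; ring
      · rw [hψval, h]; show X 2 * 0 + X 3 * X 1 = X 1 * X 3; ring
  intro y
  obtain ⟨f, hf⟩ := hrange y.2
  exact ⟨f, Subtype.ext (by simpa [LinearMap.codRestrict] using hf)⟩
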